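/- If A ∈ L^∞_+(Ω) is Hermitian (A(x)* = A(x) a.e.), then the Fréchet derivative of the Neumann-to-Dirichlet map satisfies the bilinear formula ⟨DΛ(A;B)g, f⟩_{L²(Γ)} = −∫_Ω (B ∇u^A_g) · conj(∇u^A_f) dx for all f, g ∈ L²_⋄(Γ), where u^A_f, u^A_g are the solutions of the continuum model with Neumann data f and g. -/

import Mathlib

/- Statement 9: if `A ∈ L^∞_+(Ω)` is Hermitian, then the Fréchet derivative of
the Neumann-to-Dirichlet map `Λ(C) = T N(C)` satisfies
`⟨DΛ(A;B)g, f⟩_{L²(Γ)} = −∫_Ω (B∇u^A_g)·conj(∇u^A_f) dx = −⟨u^A_g, u^A_f⟩_B`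
for all `f, g ∈ L²_⋄(Γ)`, where `u^A_f = N(A)f`.  With Mathlib's convention
`⟨X, f⟩_{L²(Γ)} = ⟪f, X⟫`, and the form `⟨·,·⟩_B` is `a B`.  The setting is as
in Statement 7; Hermitian symmetry of `A` is expressed through its form:
`⟨w,v⟩_A = conj ⟨v,w⟩_A`. -/

noncomputable section

lemma helper1 (c b p : ℝ) (hc : 0 < c) (hb : 0 ≤ b) (hp : 0 ≤ p)
    (h : c * p ^ 2 ≤ b * p) : p ≤ c⁻¹ * b := by
  rcases hp.eq_or_lt with h0 | h0
  · rw [← h0]; positivity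
  · have hcp : c * p ≤ b := by nlinarith
    rw [le_inv_mul_iff₀ hc]
    exact hcp

set_option maxHeartbeats 1000000 in
theorem stmt9
    {W : Type*} [NormedAddCommGroup W] [NormedSpace ℂ W]
    {H K : Type*} [NormedAddCommGroup H] [InnerProductSpace ℂ H] [CompleteSpace H]
    [NormedAddCommGroup K] [InnerProductSpace ℂ K] [CompleteSpace K]
    (T : H →L[ℂ] K)
    (a : W → H → H → ℂ)
    (A B : W) (cA : ℝ)
    (hsub1 : ∀ (D : W) (w w' v : H), a D (w - w') v = a D w v - a D w' v)
    (hcoefadd : ∀ (B' C : W) (w v : H), a (B' + C) w v = a B' w v + a C w v)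
    (hcoefsmul : ∀ (c : ℂ) (B' : W) (w v : H), a (c • B') w v = c * a B' w v)
    (habdd : ∀ (B' : W) (w v : H), ‖a B' w v‖ ≤ ‖B'‖ * ‖w‖ * ‖v‖)
    (hcA : 0 < cA)
    (hAcoer : ∀ v : H, cA * ‖v‖ ^ 2 ≤ (a A v v).re)
    -- `A` is Hermitian: its sesquilinear form is conjugate-symmetric
    (hherm : ∀ w v : H, a A w v = starRingEnd ℂ (a A v w))
    (P : W →L[ℂ] (H →L[ℂ] H))
    (hP : ∀ (B' : W) (y v : H), a A (P B' y) v = -a B' y v)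
    (N : W → (K →L[ℂ] H))
    (hN : ∀ C : W, (∃ c > 0, ∀ v : H, c * ‖v‖ ^ 2 ≤ (a C v v).re) →
      ∀ (f : K) (v : H), a C (N C f) v = (inner ℂ (T v) f : ℂ)) :
    ∀ f g : K,
      (inner ℂ f (fderiv ℂ (fun C => T.comp (N C)) A B g) : ℂ) =
        -a B (N A g) (N A f) := by
  intro f g
  have hAex : ∃ c > 0, ∀ v : H, c * ‖v‖ ^ 2 ≤ (a A v v).re := ⟨cA, hcA, hAcoer⟩
  have hNA : ∀ (f : K) (v : H), a A (N A f) v = (inner ℂ (T v) f : ℂ) := hN A hAex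
  -- uniqueness from coercivity
  have huniq : ∀ w1 w2 : H, (∀ v, a A w1 v = a A w2 v) → w1 = w2 := by
    intro w1 w2 hw
    have h0 : a A (w1 - w2) (w1 - w2) = 0 := by
      rw [hsub1, hw (w1 - w2)]; ring
    have h1 := hAcoer (w1 - w2)
    rw [h0, Complex.zero_re] at h1
    have h2 : ‖w1 - w2‖ = 0 := by
      by_contra hne
      have hpos : 0 < ‖w1 - w2‖ := lt_of_le_of_ne (norm_nonneg _) (Ne.symm hne)
      nlinarith [mul_pos hpos hpos]
    exact sub_eq_zero.mp (norm_eq_zero.mp h2)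
  have hsplit : ∀ (C : W) (w v : H), a C w v = a A w v + a (C - A) w v := by
    intro C w v
    have hCA : A + (C - A) = C := by abel
    rw [← hcoefadd, hCA]
  have hPbound : ∀ (B' : W) (y : H), ‖P B' y‖ ≤ cA⁻¹ * (‖B'‖ * ‖y‖) := by
    intro B' y
    apply helper1 cA (‖B'‖ * ‖y‖) _ hcA (by positivity) (norm_nonneg _)
    have h1 := hAcoer (P B' y)
    have h2 : a A (P B' y) (P B' y) = -a B' y (P B' y) := hP B' y (P B' y)
    have h3 : (a A (P B' y) (P B' y)).re ≤ ‖a B' y (P B' y)‖ := by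
      rw [h2]
      calc (-a B' y (P B' y)).re ≤ ‖-a B' y (P B' y)‖ := Complex.re_le_norm _
        _ = ‖a B' y (P B' y)‖ := norm_neg _
    have h4 := habdd B' y (P B' y)
    nlinarith
  -- the candidate derivative
  set L : W →L[ℂ] K →L[ℂ] K :=
    ((ContinuousLinearMap.compL ℂ K H K) T).comp
      ((((ContinuousLinearMap.compL ℂ K H H).flip) (N A)).comp P) with hLdef
  have hLapp : ∀ (B' : W) (k : K), L B' k = T (P B' (N A k)) := by
    intro B' k
    rfl
  -- local facts near A
  have hloc : ∀ C : W, ‖C - A‖ < cA →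
      (∀ (k : K) (v : H), a C (N C k) v = (inner ℂ (T v) k : ℂ)) ∧
       (∀ k : K, N C k - N A k = P (C - A) (N C k)) := by
    intro C hC
    have hcoerC : ∀ v : H, (cA - ‖C - A‖) * ‖v‖ ^ 2 ≤ (a C v v).re := by
      intro v
      have h1 := hAcoer v
      have h2 := habdd (C - A) v v
      have h3 : -‖a (C - A) v v‖ ≤ (a (C - A) v v).re := by
        have := Complex.abs_re_le_norm (a (C - A) v v)
        have h5 : |(a (C - A) v v).re| ≤ ‖a (C - A) v v‖ := this
        linarith [neg_abs_le (a (C - A) v v).re, abs_le.mp h5]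
      have h4 : (a C v v).re = (a A v v).re + (a (C - A) v v).re := by
        rw [hsplit C v v, Complex.add_re]
      have h5 : ‖v‖ ^ 2 = ‖v‖ * ‖v‖ := sq ‖v‖
      nlinarith
    have hNC := hN C ⟨cA - ‖C - A‖, by linarith, hcoerC⟩
    refine ⟨hNC, fun k => ?_⟩
    apply huniq
    intro v
    have e1 : a A (N C k) v = (inner ℂ (T v) k : ℂ) - a (C - A) (N C k) v := by
      have hs := hsplit C (N C k) v
      have hn := hNC k v
      linear_combination hn - hs
    rw [hsub1, e1, hNA k v, hP]
    ring
  -- quantitative remainder bound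
  have hbound : ∀ C : W, ‖C - A‖ < cA / 2 →
      ‖T.comp (N C) - T.comp (N A) - L (C - A)‖ ≤
        (2 * ‖T‖ * ‖N A‖ * cA⁻¹ ^ 2) * ‖C - A‖ ^ 2 := by
    intro C hC
    have hC' : ‖C - A‖ < cA := by linarith
    obtain ⟨hNC, hkey⟩ := hloc C hC'
    apply ContinuousLinearMap.opNorm_le_bound _ (by positivity)
    intro k
    have hNCb : ‖N C k‖ ≤ 2 * (‖N A‖ * ‖k‖) := by
      have h1 : ‖N C k - N A k‖ ≤ cA⁻¹ * (‖C - A‖ * ‖N C k‖) := by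
        rw [hkey k]; exact hPbound _ _
      have h2 : ‖N A k‖ ≤ ‖N A‖ * ‖k‖ := (N A).le_opNorm k
      have h3 : ‖N C k‖ ≤ ‖N A k‖ + ‖N C k - N A k‖ := by
        have he : N C k = N A k + (N C k - N A k) := by abel
        calc ‖N C k‖ = ‖N A k + (N C k - N A k)‖ := by rw [← he]
          _ ≤ _ := norm_add_le _ _
      have h4 : cA⁻¹ * ‖C - A‖ ≤ 1 / 2 := by
        have h5 : cA⁻¹ * ‖C - A‖ ≤ cA⁻¹ * (cA / 2) :=
          mul_le_mul_of_nonneg_left hC.le (inv_nonneg.mpr hcA.le)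
        have h6 : cA⁻¹ * (cA / 2) = 1 / 2 := by field_simp
        linarith
      nlinarith [norm_nonneg (N C k), norm_nonneg (N A k),
        mul_le_mul_of_nonneg_right h4 (norm_nonneg (N C k))]
    have heq : (T.comp (N C) - T.comp (N A) - L (C - A)) k
        = T (P (C - A) (N C k - N A k)) := by
      have h7 : (T.comp (N C) - T.comp (N A) - L (C - A)) k
          = T (N C k) - T (N A k) - T (P (C - A) (N A k)) := by
        rw [ContinuousLinearMap.sub_apply, ContinuousLinearMap.sub_apply, hLapp,
          ContinuousLinearMap.comp_apply, ContinuousLinearMap.comp_apply]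
      rw [h7, map_sub (P (C - A)) (N C k) (N A k), ← hkey k,
        map_sub T (N C k - N A k) (P (C - A) (N A k)), map_sub T (N C k) (N A k)]
    rw [heq]
    have hd : ‖N C k - N A k‖ ≤ cA⁻¹ * (‖C - A‖ * (2 * (‖N A‖ * ‖k‖))) := by
      rw [hkey k]
      calc ‖P (C - A) (N C k)‖ ≤ cA⁻¹ * (‖C - A‖ * ‖N C k‖) := hPbound _ _
        _ ≤ _ := by gcongr
    calc ‖T (P (C - A) (N C k - N A k))‖
        ≤ ‖T‖ * ‖P (C - A) (N C k - N A k)‖ := T.le_opNorm _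
      _ ≤ ‖T‖ * (cA⁻¹ * (‖C - A‖ * ‖N C k - N A k‖)) := by
          gcongr; exact hPbound _ _
      _ ≤ ‖T‖ * (cA⁻¹ * (‖C - A‖ * (cA⁻¹ * (‖C - A‖ * (2 * (‖N A‖ * ‖k‖)))))) := by
          gcongr
      _ = (2 * ‖T‖ * ‖N A‖ * cA⁻¹ ^ 2) * ‖C - A‖ ^ 2 * ‖k‖ := by ring
  -- asymptotics
  have hisO : (fun C => T.comp (N C) - T.comp (N A) - L (C - A))
      =O[nhds A] fun C => ‖C - A‖ ^ 2 := by
    rw [Asymptotics.isBigO_iff]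
    refine ⟨2 * ‖T‖ * ‖N A‖ * cA⁻¹ ^ 2, ?_⟩
    rw [Metric.eventually_nhds_iff]
    refine ⟨cA / 2, by positivity, fun C hC => ?_⟩
    rw [dist_eq_norm] at hC
    rw [Real.norm_of_nonneg (by positivity : (0:ℝ) ≤ ‖C - A‖ ^ 2)]
    exact hbound C hC
  have hlo : (fun C : W => ‖C - A‖ ^ 2) =o[nhds A] fun C => C - A := by
    rw [Asymptotics.isLittleO_iff]
    intro c hc
    rw [Metric.eventually_nhds_iff]
    refine ⟨c, hc, fun C hC => ?_⟩
    rw [dist_eq_norm] at hC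
    rw [Real.norm_of_nonneg (by positivity : (0:ℝ) ≤ ‖C - A‖ ^ 2)]
    nlinarith [norm_nonneg (C - A)]
  have hder : HasFDerivAt (fun C => T.comp (N C)) L A := by
    rw [hasFDerivAt_iff_isLittleO]
    exact hisO.trans_isLittleO hlo
  rw [hder.fderiv, hLapp]
  -- final computation using Hermitian symmetry
  have hfin : (inner ℂ (T (P B (N A g))) f : ℂ) = a A (N A f) (P B (N A g)) :=
    (hNA f _).symm
  calc (inner ℂ f (T (P B (N A g))) : ℂ)
      = starRingEnd ℂ (inner ℂ (T (P B (N A g))) f) := by rw [inner_conj_symm]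
    _ = starRingEnd ℂ (a A (N A f) (P B (N A g))) := by rw [hfin]
    _ = a A (P B (N A g)) (N A f) := by
        rw [hherm (N A f) (P B (N A g))]
        simp
    _ = -a B (N A g) (N A f) := hP B (N A g) (N A f)

end
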